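/- Let G be a finite simple bipartite graph with at least one edge and let b be a positive integer. If a nice b-bounded edge coloring of G has k color classes and some b-bounded proper edge coloring of G has k' color classes, then k ≤ (3 − 2/√b)·k'. -/

import Mathlib

open Finset

/-- `⌈a / b⌉` for natural numbers. -/
def natCeilDiv (a b : ℕ) : ℕ := (a + b - 1) / b

/-- `P` is the ordered `b`-partition of `S` (w.r.t. weights `w`): the blocks are pairwise
disjoint, cover `S`, each has at most `b` elements, earlier blocks consist of heavier
elements, and all blocks except possibly the last have exactly `b` elements. -/
def IsOrderedBPartition {β : Type*} [DecidableEq β] (w : β → ℕ) (b : ℕ) (S : Finset β)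
    {k : ℕ} (P : Fin k → Finset β) : Prop :=
  (∀ i j : Fin k, i ≠ j → Disjoint (P i) (P j)) ∧
  Finset.univ.biUnion P = S ∧
  (∀ i, (P i).card ≤ b) ∧
  (∀ i j : Fin k, i < j → ∀ x ∈ P i, ∀ y ∈ P j, w y ≤ w x) ∧
  (∀ i j : Fin k, i < j → (P i).card = b)

/-- A `b`-bounded proper vertex coloring of `G` with color classes `C i`:
a partition of the vertex set into independent sets, each of cardinality at most `b`. -/
def IsBddProperVC {α : Type*} (G : SimpleGraph α) (b : ℕ)
    {ι : Type*} (C : ι → Finset α) : Prop :=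
  (∀ v : α, ∃! i, v ∈ C i) ∧
  (∀ i, ∀ u ∈ C i, ∀ v ∈ C i, ¬ G.Adj u v) ∧
  (∀ i, (C i).card ≤ b)

/-- A proper edge coloring of `G` with color classes `C i`: a partition of the edge set
into matchings. -/
def IsProperEC {α : Type*} [Fintype α] [DecidableEq α] (G : SimpleGraph α) [DecidableRel G.Adj]
    {ι : Type*} (C : ι → Finset (Sym2 α)) : Prop :=
  (∀ e ∈ G.edgeFinset, ∃! i, e ∈ C i) ∧
  (∀ i, C i ⊆ G.edgeFinset) ∧
  (∀ i, ∀ e ∈ C i, ∀ f ∈ C i, e ≠ f → ¬ ∃ v, v ∈ e ∧ v ∈ f)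

/-- A `b`-bounded proper edge coloring: a proper edge coloring each of whose classes has
cardinality at most `b`. -/
def IsBddProperEC {α : Type*} [Fintype α] [DecidableEq α] (G : SimpleGraph α) [DecidableRel G.Adj]
    (b : ℕ) {ι : Type*} (C : ι → Finset (Sym2 α)) : Prop :=
  IsProperEC G C ∧ ∀ i, (C i).card ≤ b

/-- A nice `b`-bounded edge coloring: a sequence `C 0, …, C (k-1)` of (nonempty) pairwise
disjoint matchings of `G` covering `E(G)`, each of cardinality at most `b`, such that each
`C i` has cardinality exactly `b` or is a maximal matching of the subgraph of `G` with edge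
set `E(G) \ (C 0 ∪ … ∪ C (i-1))`. -/
def IsNiceBddEC {α : Type*} [Fintype α] [DecidableEq α] (G : SimpleGraph α) [DecidableRel G.Adj]
    (b : ℕ) {k : ℕ} (C : Fin k → Finset (Sym2 α)) : Prop :=
  IsBddProperEC G b C ∧
  (∀ i, (C i).Nonempty) ∧
  (∀ i : Fin k, (C i).card = b ∨
    ∀ e ∈ G.edgeFinset, (∀ j, j ≤ i → e ∉ C j) → ∃ f ∈ C i, ∃ v, v ∈ e ∧ v ∈ f)

/-- A greedy (first-fit) `b`-bounded edge coloring of `G`: a `b`-bounded proper edge coloring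
`C` together with an enumeration `e` of the edges in nonincreasing order of weight and a color
assignment `c` with `e j ∈ C (c j)`, such that each edge is placed in the first color that is
not full and contains no adjacent edge at the moment of placement. -/
def IsGreedyEC {α : Type*} [Fintype α] [DecidableEq α] (G : SimpleGraph α) [DecidableRel G.Adj]
    (w : Sym2 α → ℕ) (b : ℕ) {k m : ℕ} (C : Fin k → Finset (Sym2 α))
    (e : Fin m → Sym2 α) (c : Fin m → Fin k) : Prop :=
  IsBddProperEC G b C ∧
  Function.Injective e ∧
  (∀ f, f ∈ G.edgeFinset ↔ ∃ j, e j = f) ∧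
  (∀ j j' : Fin m, j ≤ j' → w (e j') ≤ w (e j)) ∧
  (∀ j, e j ∈ C (c j)) ∧
  (∀ j : Fin m, ∀ i : Fin k, i < c j →
    ((Finset.univ.filter fun l : Fin m => l < j ∧ c l = i)).card = b ∨
      ∃ l : Fin m, l < j ∧ c l = i ∧ e l ≠ e j ∧ ∃ v, v ∈ e l ∧ v ∈ e j)


private lemma sym2_eq_of_mem {α : Type*} {p q : α} (hne : p ≠ q) {f : Sym2 α}
    (hp : p ∈ f) (hq : q ∈ f) : f = s(p,q) := by
  induction f with
  | _ a b =>
    rw [Sym2.mem_iff] at hp hq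
    rcases hp with rfl | rfl <;> rcases hq with rfl | rfl
    · exact absurd rfl hne
    · rfl
    · exact Sym2.eq_swap
    · exact absurd rfl hne

private lemma adj_of_mem_edge {α : Type*} [Fintype α] [DecidableEq α] (G : SimpleGraph α)
    [DecidableRel G.Adj] {f : Sym2 α} (hf : f ∈ G.edgeFinset) {p q : α}
    (hp : p ∈ f) (hq : q ∈ f) (hne : p ≠ q) : G.Adj p q := by
  have h := sym2_eq_of_mem hne hp hq
  rw [h] at hf
  rw [SimpleGraph.mem_edgeFinset, SimpleGraph.mem_edgeSet] at hf
  exact hf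

private lemma partition_card {β ι : Type*} [DecidableEq β] [Fintype ι]
    (C : ι → Finset β) (S : Finset β)
    (h1 : ∀ e ∈ S, ∃! i, e ∈ C i) (h2 : ∀ i, C i ⊆ S) :
    ∑ i, (C i).card = S.card := by
  classical
  rw [← Finset.card_biUnion]
  · congr 1
    ext e
    simp only [Finset.mem_biUnion, Finset.mem_univ, true_and]
    constructor
    · rintro ⟨i, hi⟩; exact h2 i hi
    · intro he; exact (h1 e he).exists
  · intro i _ j _ hij
    rw [Function.onFun, Finset.disjoint_left]
    intro a hai haj
    obtain ⟨w, -, hw⟩ := h1 a (h2 i hai)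
    exact hij ((hw i hai).trans (hw j haj).symm)

private lemma core' (a c z B K : ℝ) (hc : 1 ≤ c) (hca : c ≤ a) (hz : 0 ≤ z) (hB : 1 ≤ B)
    (hK : a + z ≤ K) :
    a + c + z - 1 - (a*c + 2*z)/B ≤ 2*(1 - 1/Real.sqrt B)*K := by
  set T := Real.sqrt B with hTdef
  have hT1 : 1 ≤ T := by
    rw [hTdef, show (1:ℝ) = Real.sqrt 1 by simp]
    exact Real.sqrt_le_sqrt hB
  have hT0 : 0 < T := by linarith
  have hT2 : T^2 = B := Real.sq_sqrt (by linarith)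
  have hP : 0 ≤ z*((T-1)^2+1) + (T-a)^2 + (a-c)*(T^2-a) := by
    rcases le_or_gt a (T^2) with h | h
    · have : 0 ≤ (a-c)*(T^2-a) := mul_nonneg (by linarith) (by linarith)
      nlinarith [sq_nonneg (T-1), sq_nonneg (T-a)]
    · have h1 : (a-1)*(T^2-a) ≤ (a-c)*(T^2-a) := by nlinarith
      have h2 : (T-a)^2 + (a-1)*(T^2-a) = a*(T-1)^2 := by ring
      nlinarith [sq_nonneg (T-1), mul_nonneg (by linarith : (0:ℝ) ≤ a) (sq_nonneg (T-1))]
  have key : a + c + z - 1 - (a*c + 2*z)/B ≤ 2*(1 - 1/T)*(a+z) := by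
    rw [← sub_nonneg]
    have hB0 : (0:ℝ) < B := by linarith
    have expand : 2*(1 - 1/T)*(a+z) - (a + c + z - 1 - (a*c + 2*z)/B)
        = (z*((T-1)^2+1) + (T-a)^2 + (a-c)*(T^2-a)) / T^2 := by
      rw [← hT2]
      have hT0' : T^2 ≠ 0 := by positivity
      field_simp
      ring
    rw [expand]
    positivity
  have h2 : 2*(1 - 1/T)*(a+z) ≤ 2*(1 - 1/T)*K := by
    apply mul_le_mul_of_nonneg_left hK
    have : 1/T ≤ 1 := by
      rw [div_le_one hT0]; exact hT1
    linarith
  linarith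

private lemma final_calc (b k' F x y z : ℕ) (hb : 0 < b)
    (hN1 : F*b + (x + y + 2*z + x*y + 1) ≤ k'*b)
    (hN2 : x + z + 1 ≤ k') (hN3 : y + z + 1 ≤ k') :
    ((F + x + y + z + 1 : ℕ) : ℝ) ≤ (3 - 2/Real.sqrt b) * k' := by
  have hb0 : (0:ℝ) < b := by exact_mod_cast hb
  have hb1 : (1:ℝ) ≤ b := by exact_mod_cast hb
  have hN1' : (F:ℝ)*b + (((x:ℝ)+1)*((y:ℝ)+1) + 2*z) ≤ (k':ℝ)*b := by
    have : ((F*b + (x + y + 2*z + x*y + 1) : ℕ) : ℝ) ≤ ((k'*b : ℕ) : ℝ) := by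
      exact_mod_cast hN1
    push_cast at this
    nlinarith [this]
  have hF : (F:ℝ) + (((x:ℝ)+1)*((y:ℝ)+1) + 2*z)/b ≤ (k':ℝ) := by
    have h2 : (((x:ℝ)+1)*((y:ℝ)+1) + 2*z)/b ≤ (k':ℝ) - F := by
      rw [div_le_iff₀ hb0]; nlinarith [hN1']
    linarith
  have hx0 : (0:ℝ) ≤ (x:ℝ) := Nat.cast_nonneg x
  have hy0 : (0:ℝ) ≤ (y:ℝ) := Nat.cast_nonneg y
  have hz0 : (0:ℝ) ≤ (z:ℝ) := Nat.cast_nonneg z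
  have hN2' : (x:ℝ) + z + 1 ≤ k' := by exact_mod_cast hN2
  have hN3' : (y:ℝ) + z + 1 ≤ k' := by exact_mod_cast hN3
  have hcore : ((x:ℝ)+1) + ((y:ℝ)+1) + z - 1 - (((x:ℝ)+1)*((y:ℝ)+1) + 2*z)/b
      ≤ 2*(1 - 1/Real.sqrt b)*(k':ℝ) := by
    rcases le_total (x:ℝ) (y:ℝ) with h | h
    · have hc := core' ((y:ℝ)+1) ((x:ℝ)+1) z b k' (by linarith) (by linarith) hz0
        hb1 (by linarith)
      have hmm : ((y:ℝ)+1)*((x:ℝ)+1) = ((x:ℝ)+1)*((y:ℝ)+1) := by ring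
      rw [hmm] at hc
      linarith
    · have hc := core' ((x:ℝ)+1) ((y:ℝ)+1) z b k' (by linarith) (by linarith) hz0
        hb1 (by linarith)
      linarith
  have hs0 : (0:ℝ) < Real.sqrt b := Real.sqrt_pos.mpr hb0
  have hrw : (3 - 2/Real.sqrt b) * (k':ℝ) = (k':ℝ) + 2*(1 - 1/Real.sqrt b)*(k':ℝ) := by
    field_simp
    ring
  push_cast
  rw [hrw]
  linarith

private lemma inj_count {α : Type*} [Fintype α] [DecidableEq α] (G : SimpleGraph α)
    [DecidableRel G.Adj] (U : Set α) (hbip : ∀ u v : α, G.Adj u v → (u ∈ U ↔ v ∉ U))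
    {k : ℕ} (C : Fin k → Finset (Sym2 α))
    (hsub : ∀ i, C i ⊆ G.edgeFinset)
    (hdisj : ∀ i j : Fin k, i ≠ j → ∀ f, f ∈ C i → f ∈ C j → False)
    (u v : α) (huv : G.Adj u v) (last : Fin k) (helast : s(u,v) ∈ C last)
    (i : Fin k)
    (hmaxi : ∀ g ∈ G.edgeFinset, (∀ l, l ≤ i → g ∉ C l) → ∃ f ∈ C i, ∃ w, w ∈ g ∧ w ∈ f)
    (hPU : ∃ f ∈ C i, u ∈ f) (hPV : ¬ ∃ f ∈ C i, v ∈ f)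
    (S : Finset (Fin k)) (hS : ∀ j ∈ S, i < j ∧ j ≠ last ∧ ∃ f ∈ C j, v ∈ f) :
    S.card + 1 ≤ (C i).card := by
  classical
  obtain ⟨fu, hfuC, hfuu⟩ := hPU
  haveI : Inhabited (Sym2 α) := ⟨s(u,v)⟩
  have hQ : ∀ j ∈ S, ∃ f, f ∈ (C i).erase fu ∧ ∃ t, t ∈ f ∧ (u ∈ U ↔ t ∈ U) ∧ s(v,t) ∈ C j := by
    intro j hj
    obtain ⟨hij, hjlast, g, hgC, hvg⟩ := hS j hj
    obtain ⟨t, rfl⟩ := Sym2.mem_iff_exists.mp hvg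
    have hgE : s(v,t) ∈ G.edgeFinset := hsub j hgC
    have hadjvt : G.Adj v t := by
      rwa [SimpleGraph.mem_edgeFinset, SimpleGraph.mem_edgeSet] at hgE
    have hside : (u ∈ U ↔ t ∈ U) := by
      have h1 := hbip u v huv; have h2 := hbip v t hadjvt; tauto
    have hnotin : ∀ l, l ≤ i → s(v,t) ∉ C l := by
      intro l hl hmem
      have hlj : l ≠ j := by
        intro h; subst h; exact absurd (lt_of_le_of_lt hl hij) (lt_irrefl _)
      exact hdisj l j hlj _ hmem hgC
    obtain ⟨f, hfC, w, hwg, hwf⟩ := hmaxi _ hgE hnotin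
    have hwt : t ∈ f := by
      rcases Sym2.mem_iff.mp hwg with rfl | rfl
      · exact absurd ⟨f, hfC, hwf⟩ hPV
      · exact hwf
    have hfne : f ≠ fu := by
      rintro rfl
      by_cases hut : u = t
      · subst hut
        have : s(u,v) ∈ C j := by rw [Sym2.eq_swap]; exact hgC
        exact hdisj j last hjlast _ this helast
      · have hadjut : G.Adj u t := adj_of_mem_edge G (hsub i hfC) hfuu hwt hut
        have h3 := hbip u t hadjut
        tauto
    exact ⟨f, Finset.mem_erase.mpr ⟨hfne, hfC⟩, t, hwt, hside, hgC⟩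
  choose! φ hφ using hQ
  have hinj : Set.InjOn φ S := by
    intro j hj j' hj' hEq
    obtain ⟨hf1, t, ht1, ht2, ht3⟩ := hφ j hj
    obtain ⟨hf1', t', ht1', ht2', ht3'⟩ := hφ j' hj'
    have hmemCi : φ j ∈ C i := (Finset.mem_erase.mp hf1).2
    have htt : t = t' := by
      by_contra htt
      have hadj : G.Adj t t' := by
        apply adj_of_mem_edge G (hsub i hmemCi) ht1 _ htt
        rw [hEq]; exact ht1'
      have h3 := hbip t t' hadj
      tauto
    subst htt
    by_contra hne
    exact hdisj j j' hne _ ht3 ht3'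
  have h1 : S.card ≤ ((C i).erase fu).card :=
    Finset.card_le_card_of_injOn φ (fun j hj => (hφ j hj).1) hinj
  rw [Finset.card_erase_of_mem hfuC] at h1
  have h2 : 1 ≤ (C i).card := Finset.card_pos.mpr ⟨fu, hfuC⟩
  omega

private lemma budget {α : Type*} [Fintype α] [DecidableEq α] (G : SimpleGraph α)
    [DecidableRel G.Adj] {k k' : ℕ}
    (C : Fin k → Finset (Sym2 α)) (C' : Fin k' → Finset (Sym2 α))
    (hsub : ∀ i, C i ⊆ G.edgeFinset)
    (hdisj : ∀ i j : Fin k, i ≠ j → ∀ f, f ∈ C i → f ∈ C j → False)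
    (hpart' : ∀ e ∈ G.edgeFinset, ∃! i, e ∈ C' i)
    (hmatch' : ∀ i, ∀ e ∈ C' i, ∀ f ∈ C' i, e ≠ f → ¬ ∃ v, v ∈ e ∧ v ∈ f)
    (u : α) (e : Sym2 α) (last : Fin k) (helast : e ∈ C last) (hue : u ∈ e)
    (S : Finset (Fin k)) (hS : ∀ j ∈ S, j ≠ last ∧ ∃ f ∈ C j, u ∈ f) :
    S.card + 1 ≤ k' := by
  classical
  have heE : e ∈ G.edgeFinset := hsub last helast
  set Eu := G.edgeFinset.filter (fun f => u ∈ f) with hEudef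
  have heEu : e ∈ Eu := Finset.mem_filter.mpr ⟨heE, hue⟩
  haveI : Inhabited (Sym2 α) := ⟨e⟩
  have hQ : ∀ j ∈ S, ∃ f, f ∈ Eu.erase e ∧ f ∈ C j := by
    intro j hj
    obtain ⟨hjlast, f, hfC, huf⟩ := hS j hj
    refine ⟨f, Finset.mem_erase.mpr ⟨?_, Finset.mem_filter.mpr ⟨hsub j hfC, huf⟩⟩, hfC⟩
    rintro rfl
    exact hdisj j last hjlast _ hfC helast
  choose! φ hφ using hQ
  have h1 : S.card ≤ (Eu.erase e).card := by
    apply Finset.card_le_card_of_injOn φ (fun j hj => (hφ j hj).1)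
    intro j hj j' hj' hEq
    by_contra hne
    exact hdisj j j' hne _ (hφ j hj).2 (hEq ▸ (hφ j' hj').2)
  haveI : Inhabited (Fin k') := ⟨(hpart' e heE).exists.choose⟩
  have hQ2 : ∀ f ∈ Eu, ∃ i : Fin k', f ∈ C' i :=
    fun f hf => (hpart' f (Finset.mem_filter.mp hf).1).exists
  choose! ψ hψ using hQ2
  have h2 : Eu.card ≤ k' := by
    have h3 := Finset.card_le_card_of_injOn (s := Eu) (t := Finset.univ) ψ
      (fun f _ => Finset.mem_univ (ψ f)) ?_
    · simpa using h3
    · intro f hf f' hf' hEq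
      by_contra hne
      have h := hmatch' (ψ f) f (hψ f hf) f' (by rw [hEq]; exact hψ f' hf') hne
      exact h ⟨u, (Finset.mem_filter.mp hf).2, (Finset.mem_filter.mp hf').2⟩
  have h3 : (Eu.erase e).card = Eu.card - 1 := Finset.card_erase_of_mem heEu
  have h4 : 0 < Eu.card := Finset.card_pos.mpr ⟨e, heEu⟩
  omega

private lemma double_count {k : ℕ} (U' V' : Finset (Fin k))
    (hdisj : ∀ i ∈ U', ∀ j ∈ V', i ≠ j) :
    U'.card * V'.card ≤
      (∑ i ∈ U', (V'.filter (fun j => i < j)).card) +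
      (∑ j ∈ V', (U'.filter (fun i => j < i)).card) := by
  classical
  have key : ∀ i ∈ U', ∀ j ∈ V',
      ((if i < j then 1 else 0) + (if j < i then 1 else 0) : ℕ) = 1 := by
    intro i hi j hj
    rcases lt_or_gt_of_ne (hdisj i hi j hj) with h | h
    · simp [h, asymm h]
    · simp [h, asymm h]
  have e1 : ∑ i ∈ U', (V'.filter (fun j => i < j)).card
      = ∑ i ∈ U', ∑ j ∈ V', (if i < j then 1 else 0) := by
    apply Finset.sum_congr rfl
    intro i _
    rw [Finset.card_filter]
  have e2 : ∑ j ∈ V', (U'.filter (fun i => j < i)).card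
      = ∑ i ∈ U', ∑ j ∈ V', (if j < i then 1 else 0) := by
    rw [Finset.sum_comm]
    apply Finset.sum_congr rfl
    intro j _
    rw [Finset.card_filter]
  rw [e1, e2, ← Finset.sum_add_distrib]
  have e3 : ∀ i ∈ U', (∑ j ∈ V', ((if i < j then 1 else 0) + (if j < i then 1 else 0)))
      = V'.card := by
    intro i hi
    rw [Finset.card_eq_sum_ones]
    apply Finset.sum_congr rfl
    intro j hj
    exact key i hi j hj
  calc U'.card * V'.card = ∑ _i ∈ U', V'.card := by rw [Finset.sum_const, smul_eq_mul]
    _ = ∑ i ∈ U', ∑ j ∈ V', ((if i < j then 1 else 0) + (if j < i then 1 else 0)) := by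
        apply Finset.sum_congr rfl
        intro i hi
        exact (e3 i hi).symm
    _ ≤ _ := le_of_eq (by
        apply Finset.sum_congr rfl
        intro i _
        rw [Finset.sum_add_distrib])


/-- If a bipartite graph `G` with at least one edge has a nice `b`-bounded edge coloring with
`k` classes and some `b`-bounded proper edge coloring with `k'` classes, then
`k ≤ (3 − 2/√b)·k'`. -/
theorem stmt_8 {α : Type*} [Fintype α] [DecidableEq α] (G : SimpleGraph α) [DecidableRel G.Adj]
    (U : Set α) (hbip : ∀ u v : α, G.Adj u v → (u ∈ U ↔ v ∉ U))
    (hE : G.edgeFinset.Nonempty) (b : ℕ) (hb : 0 < b)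
    (k k' : ℕ) (C : Fin k → Finset (Sym2 α)) (C' : Fin k' → Finset (Sym2 α))
    (hC : IsNiceBddEC G b C) (hC' : IsBddProperEC G b C') :
    (k : ℝ) ≤ (3 - 2 / Real.sqrt b) * (k' : ℝ) := by
  classical
  obtain ⟨⟨⟨hpart, hsub, hmatch⟩, hble⟩, hne, hnice⟩ := hC
  obtain ⟨⟨hpart', hsub', hmatch'⟩, hble'⟩ := hC'
  have hk : 0 < k := by
    obtain ⟨e₀, he₀⟩ := hE
    obtain ⟨i, -⟩ := hpart e₀ he₀
    exact i.pos
  have hdisj : ∀ i j : Fin k, i ≠ j → ∀ f, f ∈ C i → f ∈ C j → False := by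
    intro i j hij f hfi hfj
    obtain ⟨w, -, hw⟩ := hpart f (hsub i hfi)
    exact hij ((hw i hfi).trans (hw j hfj).symm)
  set last : Fin k := ⟨k-1, Nat.sub_lt hk one_pos⟩ with hlastdef
  have hlt_last : ∀ i : Fin k, i ≠ last → i < last := by
    intro i hi
    have h1 : i.val < k := i.isLt
    have h2 : i.val ≠ k - 1 := fun h => hi (Fin.ext h)
    have h3 : i.val < k - 1 := by omega
    exact h3
  obtain ⟨e, helast0⟩ := hne last
  obtain ⟨u, v, huv, helast⟩ : ∃ u v, G.Adj u v ∧ s(u,v) ∈ C last := by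
    have heE0 : e ∈ G.edgeFinset := hsub last helast0
    revert heE0 helast0
    induction e using Sym2.ind with
    | _ u v =>
      intro h1 h2
      exact ⟨u, v, by rwa [SimpleGraph.mem_edgeFinset, SimpleGraph.mem_edgeSet] at h2, h1⟩
  clear helast0
  have heE : s(u,v) ∈ G.edgeFinset := hsub last helast
  set PU : Fin k → Prop := fun i => ∃ f ∈ C i, u ∈ f with hPUdef
  set PV : Fin k → Prop := fun i => ∃ f ∈ C i, v ∈ f with hPVdef
  set NF : Finset (Fin k) :=
    (Finset.univ.erase last).filter (fun i => ¬ (C i).card = b) with hNFdef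
  set FF : Finset (Fin k) :=
    (Finset.univ.erase last).filter (fun i => (C i).card = b) with hFFdef
  set U' : Finset (Fin k) := NF.filter (fun i => ¬ PV i) with hU'def
  set V' : Finset (Fin k) := NF.filter (fun i => PV i ∧ ¬ PU i) with hV'def
  set B' : Finset (Fin k) := NF.filter (fun i => PV i ∧ PU i) with hB'def
  set HU : Finset (Fin k) := NF.filter PU with hHUdef
  set HV : Finset (Fin k) := NF.filter PV with hHVdef
  -- basic membership facts
  have hNFmem : ∀ i ∈ NF, i ≠ last ∧ (C i).card ≠ b := by
    intro i hi
    simp only [hNFdef, Finset.mem_filter, Finset.mem_erase, Finset.mem_univ, and_true] at hi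
    exact ⟨hi.1, hi.2⟩
  -- maximality for NF classes
  have hmaxNF : ∀ i ∈ NF,
      ∀ g ∈ G.edgeFinset, (∀ l, l ≤ i → g ∉ C l) → ∃ f ∈ C i, ∃ w, w ∈ g ∧ w ∈ f := by
    intro i hi
    exact (hnice i).resolve_left (hNFmem i hi).2
  -- every NF class hits u or v
  have hhit : ∀ i ∈ NF, PU i ∨ PV i := by
    intro i hi
    have hil : i < last := hlt_last i (hNFmem i hi).1
    have hnotin : ∀ l, l ≤ i → s(u,v) ∉ C l := by
      intro l hl hmem
      have : l ≠ last := ne_of_lt (lt_of_le_of_lt hl hil)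
      exact hdisj l last this _ hmem helast
    obtain ⟨f, hf, w, hwe, hwf⟩ := hmaxNF i hi _ heE hnotin
    rcases Sym2.mem_iff.mp hwe with rfl | rfl
    · exact Or.inl ⟨f, hf, hwf⟩
    · exact Or.inr ⟨f, hf, hwf⟩
  -- cardinalities
  have hcard_erase : (Finset.univ.erase last).card = k - 1 := by
    rw [Finset.card_erase_of_mem (Finset.mem_univ last), Finset.card_univ, Fintype.card_fin]
  have hcard1 : FF.card + NF.card = k - 1 := by
    rw [hFFdef, hNFdef, Finset.card_filter_add_card_filter_not, hcard_erase]
  have hcard2 : HV.card + U'.card = NF.card := by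
    rw [hHVdef, hU'def, Finset.card_filter_add_card_filter_not]
  have hcard3 : B'.card + V'.card = HV.card := by
    have h1 : HV.filter PU = B' := by rw [hHVdef, hB'def, Finset.filter_filter]
    have h2 : HV.filter (fun i => ¬ PU i) = V' := by
      rw [hHVdef, hV'def, Finset.filter_filter]
    rw [← h1, ← h2, Finset.card_filter_add_card_filter_not]
  have hHUeq : HU = U' ∪ B' := by
    ext i
    simp only [hHUdef, hU'def, hB'def, Finset.mem_union, Finset.mem_filter]
    constructor
    · rintro ⟨hi, hPUi⟩
      by_cases hPVi : PV i
      · exact Or.inr ⟨hi, hPVi, hPUi⟩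
      · exact Or.inl ⟨hi, hPVi⟩
    · rintro (⟨hi, hPVi⟩ | ⟨hi, -, hPUi⟩)
      · exact ⟨hi, (hhit i hi).resolve_right hPVi⟩
      · exact ⟨hi, hPUi⟩
  have hcard4 : HU.card = U'.card + B'.card := by
    rw [hHUeq, Finset.card_union_of_disjoint]
    rw [Finset.disjoint_left]
    intro i hi hi'
    simp only [hU'def, Finset.mem_filter] at hi
    simp only [hB'def, Finset.mem_filter] at hi'
    exact hi.2 hi'.2.1
  -- budgets
  have hbudU : HU.card + 1 ≤ k' := by
    apply budget G C C' hsub hdisj hpart' hmatch' u s(u,v) last helast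
      (Sym2.mem_mk_left u v) HU
    intro j hj
    simp only [hHUdef, Finset.mem_filter] at hj
    exact ⟨(hNFmem j hj.1).1, hj.2⟩
  have hbudV : HV.card + 1 ≤ k' := by
    apply budget G C C' hsub hdisj hpart' hmatch' v s(u,v) last helast
      (Sym2.mem_mk_right u v) HV
    intro j hj
    simp only [hHVdef, Finset.mem_filter] at hj
    exact ⟨(hNFmem j hj.1).1, hj.2⟩
  -- size lower bounds for U' and V' classes
  have hUcount : ∀ i ∈ U', (HV.filter (fun j => i < j)).card + 1 ≤ (C i).card := by
    intro i hi
    have hi' := hi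
    simp only [hU'def, Finset.mem_filter] at hi'
    apply inj_count G U hbip C hsub hdisj u v huv last helast i
      (hmaxNF i hi'.1) ((hhit i hi'.1).resolve_right hi'.2) hi'.2
    intro j hj
    simp only [hHVdef, Finset.mem_filter] at hj
    exact ⟨hj.2, (hNFmem j hj.1.1).1, hj.1.2⟩
  have hVcount : ∀ i ∈ V', (HU.filter (fun j => i < j)).card + 1 ≤ (C i).card := by
    intro i hi
    have hi' := hi
    simp only [hV'def, Finset.mem_filter] at hi'
    have helast' : s(v,u) ∈ C last := by rwa [Sym2.eq_swap]
    apply inj_count G U hbip C hsub hdisj v u huv.symm last helast' i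
      (hmaxNF i hi'.1) hi'.2.1 hi'.2.2
    intro j hj
    simp only [hHUdef, Finset.mem_filter] at hj
    exact ⟨hj.2, (hNFmem j hj.1.1).1, hj.1.2⟩
  -- B' classes have ≥ 2 edges
  have hBcount : ∀ i ∈ B', 2 ≤ (C i).card := by
    intro i hi
    simp only [hB'def, Finset.mem_filter] at hi
    obtain ⟨fv, hfvC, hvfv⟩ := hi.2.1
    obtain ⟨fu, hfuC, hufu⟩ := hi.2.2
    have hne2 : fu ≠ fv := by
      rintro rfl
      have heq : fu = s(u,v) := sym2_eq_of_mem huv.ne hufu hvfv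
      rw [heq] at hfuC
      exact hdisj i last (hNFmem i hi.1).1 _ hfuC helast
    exact Finset.one_lt_card.mpr ⟨fu, hfuC, fv, hfvC, hne2⟩
  -- edge count identities
  have hm1 : ∑ i, (C i).card = G.edgeFinset.card := partition_card C _ hpart hsub
  have hm2 : ∑ i, (C' i).card = G.edgeFinset.card := partition_card C' _ hpart' hsub'
  have hm3 : G.edgeFinset.card ≤ k' * b := by
    rw [← hm2]
    calc ∑ i, (C' i).card ≤ ∑ _i : Fin k', b :=
          Finset.sum_le_sum (fun i _ => hble' i)
      _ = k' * b := by rw [Finset.sum_const, Finset.card_univ, Fintype.card_fin, smul_eq_mul]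
  -- decompose the sum over classes
  have hsplit1 : ∑ i ∈ Finset.univ.erase last, (C i).card + (C last).card
      = ∑ i, (C i).card := Finset.sum_erase_add _ _ (Finset.mem_univ last)
  have hsplit2 : ∑ i ∈ FF, (C i).card + ∑ i ∈ NF, (C i).card
      = ∑ i ∈ Finset.univ.erase last, (C i).card := by
    rw [hFFdef, hNFdef]
    exact Finset.sum_filter_add_sum_filter_not _ _ _
  have hsplit3 : ∑ i ∈ HV, (C i).card + ∑ i ∈ U', (C i).card = ∑ i ∈ NF, (C i).card := by
    rw [hHVdef, hU'def]
    exact Finset.sum_filter_add_sum_filter_not _ _ _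
  have hsplit4 : ∑ i ∈ B', (C i).card + ∑ i ∈ V', (C i).card = ∑ i ∈ HV, (C i).card := by
    have h1 : HV.filter PU = B' := by rw [hHVdef, hB'def, Finset.filter_filter]
    have h2 : HV.filter (fun i => ¬ PU i) = V' := by
      rw [hHVdef, hV'def, Finset.filter_filter]
    rw [← h1, ← h2]
    exact Finset.sum_filter_add_sum_filter_not _ _ _
  have hFFsum : ∑ i ∈ FF, (C i).card = FF.card * b := by
    rw [Finset.sum_congr rfl (fun i hi => by
      simp only [hFFdef, Finset.mem_filter] at hi
      exact hi.2), Finset.sum_const, smul_eq_mul]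
  -- lower bounds on sums
  have hU'sum : U'.card + ∑ i ∈ U', (V'.filter (fun j => i < j)).card
      ≤ ∑ i ∈ U', (C i).card := by
    calc U'.card + ∑ i ∈ U', (V'.filter (fun j => i < j)).card
        = ∑ i ∈ U', ((V'.filter (fun j => i < j)).card + 1) := by
          rw [Finset.sum_add_distrib, Finset.sum_const, smul_eq_mul, mul_one, add_comm]
      _ ≤ ∑ i ∈ U', (C i).card := by
          apply Finset.sum_le_sum
          intro i hi
          calc (V'.filter (fun j => i < j)).card + 1
              ≤ (HV.filter (fun j => i < j)).card + 1 := by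
                have hsub2 : V' ⊆ HV := by
                  intro a ha
                  simp only [hV'def, Finset.mem_filter] at ha
                  simp only [hHVdef, Finset.mem_filter]
                  exact ⟨ha.1, ha.2.1⟩
                exact Nat.add_le_add_right
                  (Finset.card_le_card (Finset.filter_subset_filter _ hsub2)) 1
            _ ≤ (C i).card := hUcount i hi
  have hV'sum : V'.card + ∑ i ∈ V', (U'.filter (fun j => i < j)).card
      ≤ ∑ i ∈ V', (C i).card := by
    calc V'.card + ∑ i ∈ V', (U'.filter (fun j => i < j)).card
        = ∑ i ∈ V', ((U'.filter (fun j => i < j)).card + 1) := by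
          rw [Finset.sum_add_distrib, Finset.sum_const, smul_eq_mul, mul_one, add_comm]
      _ ≤ ∑ i ∈ V', (C i).card := by
          apply Finset.sum_le_sum
          intro i hi
          calc (U'.filter (fun j => i < j)).card + 1
              ≤ (HU.filter (fun j => i < j)).card + 1 := by
                have hsub2 : U' ⊆ HU := by
                  intro a ha
                  simp only [hU'def, Finset.mem_filter] at ha
                  simp only [hHUdef, Finset.mem_filter]
                  exact ⟨ha.1, (hhit a ha.1).resolve_right ha.2⟩
                exact Nat.add_le_add_right
                  (Finset.card_le_card (Finset.filter_subset_filter _ hsub2)) 1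
            _ ≤ (C i).card := hVcount i hi
  have hB'sum : 2 * B'.card ≤ ∑ i ∈ B', (C i).card := by
    calc 2 * B'.card = ∑ _i ∈ B', 2 := by rw [Finset.sum_const, smul_eq_mul, mul_comm]
      _ ≤ ∑ i ∈ B', (C i).card := Finset.sum_le_sum hBcount
  have hdc : U'.card * V'.card ≤
      (∑ i ∈ U', (V'.filter (fun j => i < j)).card) +
      (∑ j ∈ V', (U'.filter (fun i => j < i)).card) := by
    apply double_count
    intro i hi j hj
    simp only [hU'def, Finset.mem_filter] at hi
    simp only [hV'def, Finset.mem_filter] at hj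
    intro hEq
    exact hi.2 (hEq ▸ hj.2.1)
  have hlastpos : 1 ≤ (C last).card := Finset.card_pos.mpr ⟨s(u,v), helast⟩
  -- main numeric inequality in ℕ
  have hN1 : FF.card * b +
      (U'.card + V'.card + 2 * B'.card + U'.card * V'.card + 1) ≤ k' * b := by
    have h := hm3
    rw [← hm1, ← hsplit1, ← hsplit2, ← hsplit3, ← hsplit4, hFFsum] at h
    omega
  have hN2 : U'.card + B'.card + 1 ≤ k' := by omega
  have hN3 : V'.card + B'.card + 1 ≤ k' := by omega
  have hkeq : k = FF.card + U'.card + V'.card + B'.card + 1 := by omega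
  have := final_calc b k' FF.card U'.card V'.card B'.card hb (by
    calc FF.card * b + (U'.card + V'.card + 2 * B'.card + U'.card * V'.card + 1)
        ≤ k' * b := hN1) hN2 hN3
  rw [hkeq]
  exact_mod_cast this
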